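/- Let ℂ : Sym₃ → Sym₃ be an elasticity tensor that is coercive with constant c > 0. Then for every Ā ∈ Sym₂ (identified with an element of Sym₃ with vanishing third row and column) one has C̄Ā·Ā = min over b ∈ ℝ³ of ℂ(Ā + b⊙e₃)·(Ā + b⊙e₃), and C̄Ā·Ā ≥ c|Ā|²; in particular the self-adjoint map C̄ : Sym₂ → Sym₂ is positive definite. -/

import Mathlib

open Matrix
open scoped BigOperators

noncomputable section

/-- The space of real 3×3 matrices; symmetric ones form `Sym₃`. -/
abbrev M3 : Type := Matrix (Fin 3) (Fin 3) ℝ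

/-- The Frobenius pairing `A·B := tr (A*B)`. -/
def dot3 (A B : M3) : ℝ := (A * B).trace

/-- The standard basis vector `e i` of `ℝ³`. -/
def bv (i : Fin 3) : Fin 3 → ℝ := Pi.single i 1

/-- The symmetrized tensor product `a ⊙ b := (1/2)(a⊗b + b⊗a)`. -/
def symOd (a b : Fin 3 → ℝ) : M3 := Matrix.of fun i j => (a i * b j + b i * a j) / 2

/-- `b ⊙ e₃`. -/
def od3 (b : Fin 3 → ℝ) : M3 := symOd b (bv 2)

/-- Components `ℂ_{ijkl} := ℂ(e_k⊙e_l)·(e_i⊙e_j)` of the elasticity tensor. -/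
def Ccomp (C : M3 →ₗ[ℝ] M3) (i j k l : Fin 3) : ℝ :=
  dot3 (C (symOd (bv k) (bv l))) (symOd (bv i) (bv j))

/-- The matrix `𝕔` with `𝕔_{ij} := ℂ_{i3j3}`. -/
def cmat (C : M3 →ₗ[ℝ] M3) : M3 := Matrix.of fun i j => Ccomp C i 2 j 2

/-- Components `C̄_{αβγδ} := ℂ_{αβγδ} − ℂ_{αβj3}(𝕔⁻¹)_{ji}ℂ_{i3γδ}` of the reduced tensor. -/
def cbar (C : M3 →ₗ[ℝ] M3) (α β γ δ : Fin 3) : ℝ :=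
  Ccomp C α β γ δ
    - ∑ j : Fin 3, ∑ i : Fin 3, Ccomp C α β j 2 * (cmat C)⁻¹ j i * Ccomp C i 2 γ δ

/-- The quadratic form `C̄Ā·Ā` (for planar `Ā` only the Greek indices contribute). -/
def qbar (C : M3 →ₗ[ℝ] M3) (A : M3) : ℝ :=
  ∑ α : Fin 3, ∑ β : Fin 3, ∑ γ : Fin 3, ∑ δ : Fin 3, cbar C α β γ δ * A γ δ * A α β

/-- `A` has vanishing third row and column (identification of `Sym₂` inside `Sym₃`). -/
def planar (A : M3) : Prop := ∀ i : Fin 3, A i 2 = 0 ∧ A 2 i = 0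

/-! ### Auxiliary lemmas -/

lemma dot3_eq (A B : M3) : dot3 A B = ∑ i, ∑ j, A i j * B j i := by
  simp [dot3, Matrix.trace, Matrix.mul_apply, Matrix.diag]

lemma dot3_comm (A B : M3) : dot3 A B = dot3 B A := by
  unfold dot3; exact Matrix.trace_mul_comm A B

lemma dot3_add_right (A B D : M3) : dot3 A (B + D) = dot3 A B + dot3 A D := by
  simp [dot3, mul_add]

lemma dot3_add_left (A B D : M3) : dot3 (A + B) D = dot3 A D + dot3 B D := by
  simp [dot3, add_mul]

lemma dot3_smul_right (r : ℝ) (A B : M3) : dot3 A (r • B) = r * dot3 A B := by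
  simp [dot3]

lemma dot3_smul_left (r : ℝ) (A B : M3) : dot3 (r • A) B = r * dot3 A B := by
  simp [dot3]

lemma dot3_sum_right {ι : Type*} (s : Finset ι) (A : M3) (f : ι → M3) :
    dot3 A (∑ i ∈ s, f i) = ∑ i ∈ s, dot3 A (f i) := by
  simp [dot3, Finset.mul_sum]

lemma dot3_sum_left {ι : Type*} (s : Finset ι) (A : M3) (f : ι → M3) :
    dot3 (∑ i ∈ s, f i) A = ∑ i ∈ s, dot3 (f i) A := by
  simp [dot3, Finset.sum_mul]

lemma symOd_isSymm (a b : Fin 3 → ℝ) : (symOd a b).IsSymm := by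
  ext i j; simp [symOd, Matrix.transpose_apply]; ring

lemma od3_isSymm (b : Fin 3 → ℝ) : (od3 b).IsSymm := symOd_isSymm _ _

lemma isSymm_apply {A : M3} (hA : A.IsSymm) (i j : Fin 3) : A j i = A i j := by
  conv_lhs => rw [← hA, Matrix.transpose_apply]

lemma sym_decomp (A : M3) (hA : A.IsSymm) :
    A = ∑ k : Fin 3, ∑ l : Fin 3, A k l • symOd (bv k) (bv l) := by
  ext i j
  simp [Matrix.sum_apply, symOd, bv, Fin.sum_univ_three, Pi.single_apply]
  fin_cases i <;> fin_cases j <;>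
    simp <;> linarith [isSymm_apply hA 0 1, isSymm_apply hA 0 2, isSymm_apply hA 1 2,
      isSymm_apply hA 1 0, isSymm_apply hA 2 0, isSymm_apply hA 2 1]

lemma od3_decomp (b : Fin 3 → ℝ) :
    od3 b = ∑ i : Fin 3, b i • symOd (bv i) (bv 2) := by
  ext i j
  simp [Matrix.sum_apply, od3, symOd, bv, Fin.sum_univ_three, Pi.single_apply]
  fin_cases i <;> fin_cases j <;> simp <;> ring

lemma Ccomp_pair (C : M3 →ₗ[ℝ] M3)
    (hCsa : ∀ A B : M3, A.IsSymm → B.IsSymm → dot3 (C A) B = dot3 A (C B))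
    (i j k l : Fin 3) : Ccomp C i j k l = Ccomp C k l i j := by
  unfold Ccomp
  rw [hCsa _ _ (symOd_isSymm _ _) (symOd_isSymm _ _), dot3_comm]

set_option maxHeartbeats 1000000 in
lemma dot3_C_expand (C : M3 →ₗ[ℝ] M3) (A B : M3) (hA : A.IsSymm) (hB : B.IsSymm) :
    dot3 (C A) B = ∑ α : Fin 3, ∑ β : Fin 3, ∑ γ : Fin 3, ∑ δ : Fin 3,
      Ccomp C α β γ δ * A γ δ * B α β := by
  conv_lhs => rw [sym_decomp A hA, sym_decomp B hB]
  simp only [map_sum, _root_.map_smul, dot3_sum_left, dot3_sum_right, dot3_smul_left,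
    dot3_smul_right, smul_eq_mul, Ccomp]
  simp only [Fin.sum_univ_three]
  ring

lemma od3_norm (x : Fin 3 → ℝ) :
    dot3 (od3 x) (od3 x) = (x 0 ^ 2 + x 1 ^ 2) / 2 + x 2 ^ 2 := by
  simp [dot3_eq, od3, symOd, bv, Fin.sum_univ_three, Pi.single_apply]
  ring

/-- Let `ℂ` be an elasticity tensor, coercive with constant `c > 0`.  Then
for every `Ā ∈ Sym₂` one has `C̄Ā·Ā = min_{b ∈ ℝ³} ℂ(Ā + b⊙e₃)·(Ā + b⊙e₃)`, and
`C̄Ā·Ā ≥ c|Ā|²`; in particular the self-adjoint map `C̄ : Sym₂ → Sym₂` is positive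
definite. -/
theorem cbar_quadForm_isLeast_and_posDef
    (C : M3 →ₗ[ℝ] M3) (c : ℝ) (hc : 0 < c)
    (hCsymm : ∀ A : M3, A.IsSymm → (C A).IsSymm)
    (hCsa : ∀ A B : M3, A.IsSymm → B.IsSymm → dot3 (C A) B = dot3 A (C B))
    (hCcoer : ∀ A : M3, A.IsSymm → c * dot3 A A ≤ dot3 (C A) A)
    (Ab : M3) (hAs : Ab.IsSymm) (hAp : planar Ab) :
    IsLeast {x : ℝ | ∃ b : Fin 3 → ℝ, x = dot3 (C (Ab + od3 b)) (Ab + od3 b)} (qbar C Ab)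
    ∧ c * dot3 Ab Ab ≤ qbar C Ab
    ∧ (Ab ≠ 0 → 0 < qbar C Ab) := by
  classical
  set L : Fin 3 → ℝ := fun j => dot3 (C Ab) (symOd (bv j) (bv 2)) with hLdef
  have hMentry : ∀ i j : Fin 3, cmat C i j = dot3 (C (symOd (bv j) (bv 2))) (symOd (bv i) (bv 2)) :=
    fun i j => rfl
  have hMs : ∀ i j : Fin 3, cmat C j i = cmat C i j := by
    intro i j
    rw [hMentry, hMentry, hCsa _ _ (symOd_isSymm _ _) (symOd_isSymm _ _), dot3_comm]
  have hMsymmT : (cmat C)ᵀ = cmat C := by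
    ext i j; rw [Matrix.transpose_apply]; exact hMs i j
  -- the quadratic form of M
  have hQ : ∀ x : Fin 3 → ℝ, dot3 (C (od3 x)) (od3 x) = x ⬝ᵥ cmat C *ᵥ x := by
    intro x
    conv_lhs => rw [od3_decomp x]
    simp only [map_sum, _root_.map_smul, dot3_sum_left, dot3_sum_right, dot3_smul_left,
      dot3_smul_right, smul_eq_mul]
    simp only [← hMentry]
    simp only [dotProduct, Matrix.mulVec, Fin.sum_univ_three]
    ring
  have hodpos : ∀ x : Fin 3 → ℝ, x ≠ 0 → 0 < dot3 (od3 x) (od3 x) := by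
    intro x hx
    rw [od3_norm]
    have hex : ∃ i, x i ≠ 0 := by
      by_contra h
      push_neg at h
      exact hx (funext h)
    obtain ⟨i, hi⟩ := hex
    have hsum : 0 < ∑ j : Fin 3, x j ^ 2 :=
      Finset.sum_pos' (fun j _ => sq_nonneg _) ⟨i, Finset.mem_univ i, by positivity⟩
    rw [Fin.sum_univ_three] at hsum
    nlinarith [sq_nonneg (x 2)]
  have hodnonneg : ∀ x : Fin 3 → ℝ, 0 ≤ dot3 (od3 x) (od3 x) := by
    intro x; rw [od3_norm]; positivity
  have hQpos : ∀ x : Fin 3 → ℝ, 0 ≤ x ⬝ᵥ cmat C *ᵥ x := by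
    intro x
    rw [← hQ]
    have h1 := hCcoer (od3 x) (od3_isSymm x)
    nlinarith [hodnonneg x]
  have hMpd : (cmat C).PosDef := by
    refine Matrix.posDef_iff_dotProduct_mulVec.mpr ⟨?_, fun x hx => ?_⟩
    · ext i j
      simp only [Matrix.conjTranspose_apply, star_trivial]
      exact hMs i j
    · have h1 := hCcoer (od3 x) (od3_isSymm x)
      have h2 := hodpos x hx
      rw [hQ x] at h1
      simpa using lt_of_lt_of_le (by nlinarith) h1
  have hdet : IsUnit (cmat C).det := isUnit_iff_ne_zero.mpr hMpd.det_pos.ne'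
  have hMinvmul : cmat C * (cmat C)⁻¹ = 1 := Matrix.mul_nonsing_inv (cmat C) hdet
  set v : Fin 3 → ℝ := (cmat C)⁻¹ *ᵥ L with hvdef
  have hMv : cmat C *ᵥ v = L := by
    rw [hvdef, Matrix.mulVec_mulVec, hMinvmul, Matrix.one_mulVec]
  -- linear part
  have hlin : ∀ x : Fin 3 → ℝ, dot3 (C Ab) (od3 x) = ∑ j, L j * x j := by
    intro x
    conv_lhs => rw [od3_decomp x]
    simp only [dot3_sum_right, dot3_smul_right]
    exact Finset.sum_congr rfl fun j _ => mul_comm _ _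
  -- expansion of the energy
  have hexp : ∀ b : Fin 3 → ℝ, dot3 (C (Ab + od3 b)) (Ab + od3 b)
      = dot3 (C Ab) Ab + 2 * (∑ j, L j * b j) + b ⬝ᵥ cmat C *ᵥ b := by
    intro b
    rw [map_add, dot3_add_left, dot3_add_right, dot3_add_right]
    have h3 : dot3 (C (od3 b)) Ab = dot3 (C Ab) (od3 b) := by
      rw [hCsa _ _ (od3_isSymm b) hAs, dot3_comm]
    rw [h3, hlin b, hQ b]; ring
  -- the formula for qbar
  have hL : ∀ j : Fin 3, L j = ∑ γ : Fin 3, ∑ δ : Fin 3, Ccomp C j 2 γ δ * Ab γ δ := by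
    intro j
    show dot3 (C Ab) (symOd (bv j) (bv 2)) = _
    conv_lhs => rw [sym_decomp Ab hAs]
    simp only [map_sum, _root_.map_smul, dot3_sum_left, dot3_smul_left, smul_eq_mul, Ccomp]
    exact Finset.sum_congr rfl fun γ _ => Finset.sum_congr rfl fun δ _ => mul_comm _ _
  have hL2 : ∀ j : Fin 3, (∑ α : Fin 3, ∑ β : Fin 3, Ccomp C α β j 2 * Ab α β) = L j := by
    intro j
    rw [hL j]
    exact Finset.sum_congr rfl fun α _ => Finset.sum_congr rfl fun β _ => by
      rw [Ccomp_pair C hCsa α β j 2]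
  have hv : ∀ j : Fin 3, v j = ∑ i, (cmat C)⁻¹ j i * L i := by
    intro j; simp [hvdef, Matrix.mulVec, dotProduct]
  have hqbar : qbar C Ab = dot3 (C Ab) Ab - ∑ j, L j * v j := by
    rw [dot3_C_expand C Ab Ab hAs hAs]
    simp only [qbar, cbar, sub_mul, Finset.sum_sub_distrib]
    congr 1
    have : (∑ j, L j * v j)
        = ∑ j : Fin 3, ∑ i : Fin 3,
            (∑ α : Fin 3, ∑ β : Fin 3, Ccomp C α β j 2 * Ab α β) * (cmat C)⁻¹ j i
              * (∑ γ : Fin 3, ∑ δ : Fin 3, Ccomp C i 2 γ δ * Ab γ δ) := by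
      refine Finset.sum_congr rfl fun j _ => ?_
      rw [hL2 j, hv j, Finset.mul_sum]
      refine Finset.sum_congr rfl fun i _ => ?_
      rw [← hL i]
      ring
    rw [this]
    simp only [Fin.sum_univ_three]
    ring
  -- completing the square
  have hsq : ∀ b : Fin 3 → ℝ, (b + v) ⬝ᵥ cmat C *ᵥ (b + v)
      = b ⬝ᵥ cmat C *ᵥ b + 2 * (∑ j, L j * b j) + ∑ j, L j * v j := by
    intro b
    have e1 : cmat C *ᵥ (b + v) = cmat C *ᵥ b + L := by rw [Matrix.mulVec_add, hMv]
    have e2 : v ⬝ᵥ cmat C *ᵥ b = ∑ j, L j * b j := by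
      rw [Matrix.dotProduct_mulVec, ← hMsymmT, vecMul_transpose, hMv]
      simp [dotProduct]
    have e3 : b ⬝ᵥ L = ∑ j, L j * b j := by
      simp [dotProduct, mul_comm]
    have e4 : v ⬝ᵥ L = ∑ j, L j * v j := by
      simp [dotProduct, mul_comm]
    rw [e1, dotProduct_add, add_dotProduct, add_dotProduct, e2, e3, e4]
    ring
  have hkey : ∀ b : Fin 3 → ℝ, dot3 (C (Ab + od3 b)) (Ab + od3 b)
      = qbar C Ab + (b + v) ⬝ᵥ cmat C *ᵥ (b + v) := by
    intro b
    rw [hexp b, hqbar, hsq b]; ring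
  -- cross term vanishes for planar Ab
  have hcross : ∀ x : Fin 3 → ℝ, dot3 Ab (od3 x) = 0 := by
    intro x
    simp [dot3_eq, od3, symOd, bv, Fin.sum_univ_three, Pi.single_apply,
      (hAp 0).1, (hAp 1).1, (hAp 2).1, (hAp 0).2, (hAp 1).2, (hAp 2).2]
  -- membership
  have hmem : qbar C Ab = dot3 (C (Ab + od3 (-v))) (Ab + od3 (-v)) := by
    rw [hkey (-v)]
    simp
  refine ⟨⟨⟨-v, hmem⟩, ?_⟩, ?_, ?_⟩
  · rintro x ⟨b, rfl⟩
    rw [hkey b]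
    have := hQpos (b + v)
    linarith
  · -- coercivity
    have hsymm : (Ab + od3 (-v)).IsSymm := by
      unfold Matrix.IsSymm
      rw [Matrix.transpose_add, hAs, od3_isSymm]
    have h1 := hCcoer (Ab + od3 (-v)) hsymm
    rw [← hmem] at h1
    have h2 : dot3 Ab Ab ≤ dot3 (Ab + od3 (-v)) (Ab + od3 (-v)) := by
      rw [dot3_add_left, dot3_add_right, dot3_add_right, hcross (-v),
        dot3_comm (od3 (-v)) Ab, hcross (-v)]
      have := hodnonneg (-v)
      linarith
    calc c * dot3 Ab Ab ≤ c * dot3 (Ab + od3 (-v)) (Ab + od3 (-v)) := by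
          exact mul_le_mul_of_nonneg_left h2 hc.le
      _ ≤ qbar C Ab := h1
  · -- positive definiteness
    intro hAb
    have hpos : 0 < dot3 Ab Ab := by
      have hsq : dot3 Ab Ab = ∑ i : Fin 3, ∑ j : Fin 3, (Ab i j) ^ 2 := by
        rw [dot3_eq]
        exact Finset.sum_congr rfl fun i _ => Finset.sum_congr rfl fun j _ => by
          rw [isSymm_apply hAs j i]; ring
      have : ∃ i j, Ab i j ≠ 0 := by
        by_contra h
        push_neg at h
        exact hAb (by ext i j; simpa using h i j)
      obtain ⟨i, j, hij⟩ := this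
      rw [hsq]
      refine Finset.sum_pos' (fun a _ => Finset.sum_nonneg fun b _ => sq_nonneg _)
        ⟨i, Finset.mem_univ i, ?_⟩
      exact Finset.sum_pos' (fun b _ => sq_nonneg _) ⟨j, Finset.mem_univ j, by positivity⟩
    have h1 : c * dot3 Ab Ab ≤ qbar C Ab := by
      -- reuse the coercivity part proved above? restate quickly
      have hsymm : (Ab + od3 (-v)).IsSymm := by
        unfold Matrix.IsSymm
        rw [Matrix.transpose_add, hAs, od3_isSymm]
      have h1 := hCcoer (Ab + od3 (-v)) hsymm
      rw [← hmem] at h1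
      have h2 : dot3 Ab Ab ≤ dot3 (Ab + od3 (-v)) (Ab + od3 (-v)) := by
        rw [dot3_add_left, dot3_add_right, dot3_add_right, hcross (-v),
          dot3_comm (od3 (-v)) Ab, hcross (-v)]
        have := hodnonneg (-v)
        linarith
      calc c * dot3 Ab Ab ≤ c * dot3 (Ab + od3 (-v)) (Ab + od3 (-v)) := by
            exact mul_le_mul_of_nonneg_left h2 hc.le
        _ ≤ qbar C Ab := h1
    nlinarith
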